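/- arXiv:1301.5102 — 2 statements merged into one kernel-verified Lean document; each statement's English description precedes it below -/
import Mathlib

section
/- Every element u of the shuffle algebra S admits a unique decomposition u = Σ_{j=0}^N w_j ⧢ x0^j with w_0, …, w_N ∈ S^0 (where x0^j denotes the word consisting of j copies of x0); that is, S is a polynomial algebra in x0 with respect to the shuffle product, with coefficients in S^0. -/
open scoped BigOperators

namespace MZVRH

noncomputable section

/-- A word over the two-letter alphabet: `false` stands for `x0`, `true` for `x1`. -/
abbrev Word : Type := List Bool

/-- The shuffle algebra `S`: the free ℂ-vector space on words. -/
abbrev S : Type := Word →₀ ℂ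

/-- The word `w` viewed as an element of `S`. -/
def wordS (w : Word) : S := Finsupp.single w 1

/-- Shuffle product of two words, as an element of `S`. -/
def shWord : Word → Word → S
  | [], v => Finsupp.single v 1
  | u, [] => Finsupp.single u 1
  | a :: u, b :: v =>
      (shWord u (b :: v)).mapDomain (a :: ·)
        + (shWord (a :: u) v).mapDomain (b :: ·)
  termination_by u v => u.length + v.length
  decreasing_by all_goals simp [List.length_cons]

/-- The bilinear extension of the shuffle product to `S`. -/
def sh (x y : S) : S := x.sum fun u a => y.sum fun v b => (a * b) • shWord u v

/-- The word `x0^j`. -/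
def x0pow (j : ℕ) : Word := List.replicate j false

/-- The word `x1^i`. -/
def x1pow (i : ℕ) : Word := List.replicate i true

/-- A word is empty or ends in `x1`. -/
def EndsInX1 (w : Word) : Prop := w = [] ∨ w.getLast? = some true

/-- A word is empty or begins with `x0` and ends in `x1`. -/
def BeginsEndsX0X1 (w : Word) : Prop :=
  w = [] ∨ (w.head? = some false ∧ w.getLast? = some true)

/-- Membership in the subspace `S^0` spanned by the empty word and words ending in `x1`. -/
def InS0 (x : S) : Prop := ∀ w ∈ x.support, EndsInX1 w

/-- Membership in the subspace `S^{10}` spanned by the empty word and words beginning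
with `x0` and ending in `x1`. -/
def InS10 (x : S) : Prop := ∀ w ∈ x.support, BeginsEndsX0X1 w

/-- `Σ_j w_j ⧢ x0^j` for a finitely supported family `f : ℕ →₀ S`. -/
def decomp0Sum (f : ℕ →₀ S) : S := f.sum fun j w => sh w (wordS (x0pow j))

/-- `Σ_{i,j} x1^i ⧢ w_{ij} ⧢ x0^j` for a finitely supported family `f : ℕ × ℕ →₀ S`. -/
def decomp10Sum (f : ℕ × ℕ →₀ S) : S :=
  f.sum fun p w => sh (wordS (x1pow p.1)) (sh w (wordS (x0pow p.2)))

/-- `f` is a decomposition of `u` with coefficients in `S^0`. -/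
def HasDecomp0 (u : S) (f : ℕ →₀ S) : Prop := (∀ j, InS0 (f j)) ∧ u = decomp0Sum f

/-- `f` is a decomposition of `u` with coefficients in `S^{10}`. -/
def HasDecomp10 (u : S) (f : ℕ × ℕ →₀ S) : Prop :=
  (∀ p, InS10 (f p)) ∧ u = decomp10Sum f

open Classical in
/-- The regularization map `reg^0 : S → S^0`, the constant term of the decomposition
of `u` as a polynomial in `x0` with coefficients in `S^0`. -/
def reg0 (u : S) : S := if h : ∃ f, HasDecomp0 u f then h.choose 0 else 0

open Classical in
/-- The regularization map `reg^{10} : S → S^{10}`, the constant term of the decomposition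
of `u` as a polynomial in `x0, x1` with coefficients in `S^{10}`. -/
def reg10 (u : S) : S := if h : ∃ f, HasDecomp10 u f then h.choose (0, 0) else 0

/-- `τ`: reverse the word and exchange `x0` with `x1`. -/
def tau (w : Word) : Word := (w.map (fun b => !b)).reverse

/-- The composition `(k1, …, kr)` attached to a word `x0^{k1-1} x1 ⋯ x0^{kr-1} x1 ∈ S^0`. -/
def toComp : Word → List ℕ
  | [] => []
  | false :: w =>
      match toComp w with
      | [] => []
      | k :: ks => (k + 1) :: ks
  | true :: w => 1 :: toComp w

/-- Strictly decreasing tuples of positive integers `n1 > n2 > ⋯ > nr > 0`. -/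
def Tuples (r : ℕ) : Type := {f : Fin r → ℕ // StrictAnti f ∧ ∀ i, 0 < f i}

/-- The multiple polylogarithm `Li_{k1,…,kr}(z) = Σ_{n1 > ⋯ > nr > 0} z^{n1}/(n1^{k1} ⋯ nr^{kr})`,
attached to a composition `ks = (k1, …, kr)`; equal to `1` for the empty composition. -/
def LiComp (ks : List ℕ) (z : ℂ) : ℂ :=
  ∑' n : Tuples ks.length,
    (if h : 0 < ks.length then z ^ n.1 ⟨0, h⟩ else 1) /
      ∏ i : Fin ks.length, (n.1 i : ℂ) ^ ks.get i

/-- The multiple zeta value `ζ(k1,…,kr) = Σ_{n1 > ⋯ > nr > 0} 1/(n1^{k1} ⋯ nr^{kr})`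
attached to a composition; equal to `1` for the empty composition. -/
def zetaComp (ks : List ℕ) : ℂ :=
  ∑' n : Tuples ks.length, 1 / ∏ i : Fin ks.length, (n.1 i : ℂ) ^ ks.get i

/-- The ℂ-linear extension of `w ↦ Li(w; z)` to elements of `S` supported on `S^0` words. -/
def LiS0 (x : S) (z : ℂ) : ℂ := x.sum fun w c => c * LiComp (toComp w) z

/-- The ℂ-linear extension of `w ↦ ζ(w)` to elements of `S` supported on `S^{10}` words. -/
def zetaS (x : S) : ℂ := x.sum fun w c => c * zetaComp (toComp w)

open Classical in
/-- The extended multiple polylogarithm on `S`: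
`Li(u; z) = Σ_j Li(w_j; z) (log z)^j / j!` where `u = Σ_j w_j ⧢ x0^j` with `w_j ∈ S^0`. -/
def Li (u : S) (z : ℂ) : ℂ :=
  if h : ∃ f, HasDecomp0 u f then
    h.choose.sum fun j w => LiS0 w z * Complex.log z ^ j / (Nat.factorial j : ℂ)
  else 0

/-- The domain `D0 = ℂ ∖ {x ∈ ℝ : x ≥ 1}`. -/
def D0 : Set ℂ := {z | ¬ (z.im = 0 ∧ 1 ≤ z.re)}

/-- The domain `D1 = ℂ ∖ {x ∈ ℝ : x ≤ 0}`. -/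
def D1 : Set ℂ := {z | ¬ (z.im = 0 ∧ z.re ≤ 0)}

/-- The ℂ-linear extension of a word-indexed family of functions to `S`. -/
def extLin (h : Word → ℂ → ℂ) (x : S) (z : ℂ) : ℂ := x.sum fun w c => c * h w z

/-- A solution of the additive Riemann–Hilbert problem for multiple polylogarithms. -/
def RHSol (h0 h1 : Word → ℂ → ℂ) : Prop :=
  -- (0) shuffle homomorphisms with prescribed value on `x0`
  (∀ z ∈ D0 ∩ D1,
      (h0 [] z = 1 ∧ h1 [] z = 1) ∧
      (∀ u v : Word,
          extLin h0 (sh (wordS u) (wordS v)) z = h0 u z * h0 v z ∧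
          extLin h1 (sh (wordS u) (wordS v)) z = h1 u z * h1 v z) ∧
      h0 [false] z = Complex.log z ∧ h1 [false] z = Complex.log (1 - z)) ∧
  -- (1) holomorphy and the functional equation
  (∀ w : Word,
      DifferentiableOn ℂ (fun z => extLin h0 (reg0 (wordS w)) z) D0 ∧
      DifferentiableOn ℂ (fun z => extLin h1 (reg0 (wordS w)) z) D1 ∧
      ∀ z ∈ D0 ∩ D1,
        ∑ k ∈ Finset.range (w.length + 1),
            h1 (tau (w.take k)) z * h0 (w.drop k) z = zetaS (reg10 (wordS w))) ∧
  -- (2) asymptotic condition at infinity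
  (∀ w : Word,
      Filter.Tendsto (deriv fun z => extLin h0 (reg0 (wordS w)) z)
        (Bornology.cobounded ℂ ⊓ Filter.principal D0) (nhds 0) ∧
      Filter.Tendsto (deriv fun z => extLin h1 (reg0 (wordS w)) z)
        (Bornology.cobounded ℂ ⊓ Filter.principal D1) (nhds 0)) ∧
  -- (3) normalization at the origin
  (∀ w : Word, extLin h0 (reg0 (wordS w)) 0 = 0)

-- ===== list layer (already checked) =====
def lead : Word → ℕ
  | [] => 0
  | false :: t => lead t + 1
  | true :: _ => 0

lemma lead_append_of_mem {s : Word} (h : true ∈ s) (l : Word) : lead (s ++ l) = lead s := by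
  induction s with
  | nil => simp at h
  | cons a t ih =>
    cases a with
    | false =>
      have ht : true ∈ t := by simpa using h
      simp [lead, ih ht]
    | true => simp [lead]

lemma lead_replicate_append (m : ℕ) (s : Word) :
    lead (List.replicate m false ++ s) = m + lead s := by
  induction m with
  | zero => simp
  | succ k ih => simpa [List.replicate_succ, lead, ih] using by omega

lemma lead_eq_zero_of_head {s : Word} (h : s.head? = some true) : lead s = 0 := by
  cases s with
  | nil => simp [lead]
  | cons a t => simp at h; subst h; simp [lead]

def tr (w : Word) : ℕ := lead w.reverse

def core (w : Word) : Word := (w.reverse.drop (lead w.reverse)).reverse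

lemma replicate_append_drop (s : Word) :
    List.replicate (lead s) false ++ s.drop (lead s) = s := by
  induction s with
  | nil => simp [lead]
  | cons a t ih =>
    cases a with
    | false => simp [lead, List.replicate_succ, ih]
    | true => simp [lead]

lemma head_drop_lead (s : Word) : s.drop (lead s) = [] ∨ (s.drop (lead s)).head? = some true := by
  induction s with
  | nil => simp [lead]
  | cons a t ih =>
    cases a with
    | false => simpa [lead] using ih
    | true => simp [lead]

lemma core_spec (w : Word) : w = core w ++ List.replicate (tr w) false := by
  conv_lhs => rw [← List.reverse_reverse w, ← replicate_append_drop w.reverse]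
  simp [core, tr]

lemma endsInX1_core (w : Word) : EndsInX1 (core w) := by
  rcases head_drop_lead w.reverse with h | h
  · left; simp [core, h]
  · right; simp [core, h]

lemma tr_append_replicate {v : Word} (hv : EndsInX1 v) (m : ℕ) :
    tr (v ++ List.replicate m false) = m := by
  have h0 : lead v.reverse = 0 := by
    rcases hv with h | h
    · simp [h, lead]
    · exact lead_eq_zero_of_head (by simpa using h)
  simp [tr, List.reverse_append, lead_replicate_append, h0]

lemma tr_replicate (m : ℕ) : tr (List.replicate m false) = m := by
  simpa using tr_append_replicate (Or.inl rfl) m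

lemma core_append_replicate {v : Word} (hv : EndsInX1 v) (m : ℕ) :
    core (v ++ List.replicate m false) = v := by
  have h := core_spec (v ++ List.replicate m false)
  rw [tr_append_replicate hv m] at h
  exact (List.append_inj_left' h.symm (by rfl))

lemma append_replicate_inj {v v' : Word} (hv : EndsInX1 v) (hv' : EndsInX1 v') {j j' : ℕ}
    (h : v ++ List.replicate j false = v' ++ List.replicate j' false) : v = v' ∧ j = j' := by
  have hj : j = j' := by
    have := tr_append_replicate hv j
    rw [h, tr_append_replicate hv' j'] at this; omega
  subst hj
  exact ⟨List.append_inj_left' h rfl, rfl⟩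

lemma tr_cons_of_mem {t : Word} (h : true ∈ t) (a : Bool) : tr (a :: t) = tr t := by
  have hrev : (a :: t).reverse = t.reverse ++ [a] := by simp
  rw [tr, hrev, lead_append_of_mem (by simpa using h)]; rfl

lemma endsInX1_of_cons {a : Bool} {u : Word} (h : EndsInX1 (a :: u)) : EndsInX1 u := by
  rcases h with h | h
  · simp at h
  · cases u with
    | nil => exact Or.inl rfl
    | cons b w => right; rw [← h]; exact (List.getLast?_cons_cons ..).symm

lemma mem_of_endsInX1 {v : Word} (hv : EndsInX1 v) (hne : v ≠ []) : true ∈ v := by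
  rcases hv with h | h
  · exact absurd h hne
  · have h2 := List.getLast?_eq_head?_reverse (xs := v)
    rw [h] at h2
    have h3 : true ∈ v.reverse := List.mem_of_mem_head? h2.symm
    simpa using h3

-- ===== shWord layer =====
lemma shWord_nil_left (v : Word) : shWord [] v = wordS v := by simp [shWord, wordS]

lemma shWord_nil_right (v : Word) : shWord v [] = wordS v := by
  cases v <;> simp [shWord, wordS]

lemma shWord_cons_x0pow (a : Bool) (u : Word) (k : ℕ) :
    shWord (a :: u) (x0pow (k + 1)) =
      (shWord u (x0pow (k + 1))).mapDomain (a :: ·)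
        + (shWord (a :: u) (x0pow k)).mapDomain (false :: ·) := by
  have hx : x0pow (k + 1) = false :: x0pow k := by simp [x0pow, List.replicate_succ]
  conv_lhs => rw [hx]
  rw [shWord, ← hx]

lemma shWord_structure : ∀ (n : ℕ) (v : Word), EndsInX1 v → ∀ m : ℕ, v.length + m ≤ n →
    ∃ r : S, shWord v (x0pow m) = wordS (v ++ x0pow m) + r ∧
      ∀ t ∈ r.support, tr t < m ∧ true ∈ t := by
  intro n
  induction n with
  | zero =>
    intro v hv m hle
    have hv0 : v = [] := List.length_eq_zero_iff.1 (by omega)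
    have hm : m = 0 := by omega
    subst hv0; subst hm
    exact ⟨0, by simp [shWord_nil_left], by simp⟩
  | succ n ih =>
    intro v hv m hle
    match v, m with
    | [], m => exact ⟨0, by simp [shWord_nil_left], by simp⟩
    | a :: u, 0 =>
      exact ⟨0, by simp [shWord_nil_right, x0pow], by simp⟩
    | a :: u, (k + 1) =>
      obtain ⟨r₁, he₁, hs₁⟩ := ih u (endsInX1_of_cons hv) (k + 1) (by simp at hle ⊢; omega)
      obtain ⟨r₂, he₂, hs₂⟩ := ih (a :: u) hv k (by simp at hle ⊢; omega)
      have htrue : true ∈ (a :: u) := mem_of_endsInX1 hv (by simp)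
      refine ⟨Finsupp.mapDomain (a :: ·) r₁
          + (wordS (false :: ((a :: u) ++ x0pow k)) + Finsupp.mapDomain (false :: ·) r₂), ?_, ?_⟩
      · rw [shWord_cons_x0pow, he₁, he₂, Finsupp.mapDomain_add, Finsupp.mapDomain_add]
        unfold wordS
        rw [Finsupp.mapDomain_single, Finsupp.mapDomain_single]
        have hco : a :: (u ++ x0pow (k + 1)) = (a :: u) ++ x0pow (k + 1) := rfl
        rw [hco]
        abel
      · intro t ht
        rcases Finset.mem_union.1 (Finsupp.support_add ht) with h1 | h23
        · obtain ⟨t', ht', rfl⟩ := Finset.mem_image.1 (Finsupp.mapDomain_support h1)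
          obtain ⟨htr, hmem⟩ := hs₁ t' ht'
          exact ⟨by rw [tr_cons_of_mem hmem]; omega, by simp [hmem]⟩
        · rcases Finset.mem_union.1 (Finsupp.support_add h23) with h2 | h3
          · have : t = false :: ((a :: u) ++ x0pow k) := by
              have := Finsupp.support_single_subset h2
              simpa using this
            subst this
            have hm2 : true ∈ (a :: u) ++ x0pow k := List.mem_append_left _ htrue
            constructor
            · rw [tr_cons_of_mem hm2]
              simp only [x0pow] at *
              rw [tr_append_replicate hv k]; omega
            · simpa using hm2
          · obtain ⟨t', ht', rfl⟩ := Finset.mem_image.1 (Finsupp.mapDomain_support h3)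
            obtain ⟨htr, hmem⟩ := hs₂ t' ht'
            exact ⟨by rw [tr_cons_of_mem hmem]; omega, by simp [hmem]⟩

-- ===== sh algebra layer =====
lemma sh_zero_left (y : S) : sh 0 y = 0 := Finsupp.sum_zero_index

lemma sh_add_left (x x' y : S) : sh (x + x') y = sh x y + sh x' y := by
  unfold sh
  apply Finsupp.sum_add_index'
  · intro u; simp
  · intro u a a'; simp [add_mul, add_smul, Finsupp.sum_add]

lemma sh_single_left (w : Word) (c : ℂ) (y : S) :
    sh (Finsupp.single w c) y = y.sum fun v b => (c * b) • shWord w v := by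
  unfold sh
  exact Finsupp.sum_single_index (by simp)

lemma sh_single_left_smul (w : Word) (c : ℂ) (y : S) :
    sh (Finsupp.single w c) y = c • sh (wordS w) y := by
  rw [sh_single_left, wordS, sh_single_left, Finsupp.smul_sum]
  simp [smul_smul]

lemma sh_wordS_right (x : S) (q : Word) : x.sum (fun v c => c • shWord v q) = sh x (wordS q) := by
  unfold sh wordS
  refine (Finsupp.sum_congr fun v _ => ?_).symm
  rw [Finsupp.sum_single_index (by simp), mul_one]

lemma decomp0Sum_zero : decomp0Sum 0 = 0 := Finsupp.sum_zero_index

lemma decomp0Sum_add (f g : ℕ →₀ S) : decomp0Sum (f + g) = decomp0Sum f + decomp0Sum g := by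
  unfold decomp0Sum
  exact Finsupp.sum_add_index' (fun j => sh_zero_left _) (fun j w w' => sh_add_left w w' _)

def D0hom : (ℕ →₀ S) →+ S := AddMonoidHom.mk' decomp0Sum decomp0Sum_add

lemma decomp0Sum_sub (f g : ℕ →₀ S) : decomp0Sum (f - g) = decomp0Sum f - decomp0Sum g :=
  map_sub D0hom f g

lemma decomp0Sum_single (j : ℕ) (w : S) :
    decomp0Sum (Finsupp.single j w) = sh w (wordS (x0pow j)) :=
  Finsupp.sum_single_index (sh_zero_left _)

lemma inS0_zero : InS0 0 := by intro w hw; simp at hw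

lemma inS0_sub {x y : S} (hx : InS0 x) (hy : InS0 y) : InS0 (x - y) := by
  intro w hw
  rcases Finset.mem_union.1 (Finsupp.support_sub hw) with h | h
  · exact hx w h
  · exact hy w h

-- ===== evaluation lemmas =====
lemma eval_key {v₀ : Word} (hv₀ : EndsInX1 v₀) {J : ℕ} {v : Word} (hv : EndsInX1 v) {j : ℕ}
    (hj : j ≤ J) :
    (shWord v (x0pow j)) (v₀ ++ x0pow J) = if j = J ∧ v = v₀ then 1 else 0 := by
  obtain ⟨r, he, hs⟩ := shWord_structure (v.length + j) v hv j le_rfl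
  have hr0 : r (v₀ ++ x0pow J) = 0 := by
    by_contra h
    have hmem := Finsupp.mem_support_iff.2 h
    have := (hs _ hmem).1
    rw [show x0pow J = List.replicate J false from rfl, tr_append_replicate hv₀ J] at this
    omega
  rw [he]
  simp only [Finsupp.add_apply, hr0, add_zero, wordS, Finsupp.single_apply]
  by_cases h : v ++ x0pow j = v₀ ++ x0pow J
  · obtain ⟨h1, h2⟩ := append_replicate_inj hv hv₀ h
    simp [h, h1, h2]
  · have : ¬ (j = J ∧ v = v₀) := by
      rintro ⟨rfl, rfl⟩; exact h rfl
    simp [h, this]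

lemma decomp0Sum_apply_top {f : ℕ →₀ S} (h0 : ∀ j, InS0 (f j)) {J : ℕ}
    (hJ : ∀ j ∈ f.support, j ≤ J) {v₀ : Word} (hv₀ : EndsInX1 v₀) :
    (decomp0Sum f) (v₀ ++ x0pow J) = (f J) v₀ := by
  unfold decomp0Sum
  rw [Finsupp.sum_apply]
  have hterm : ∀ j ∈ f.support, (sh (f j) (wordS (x0pow j))) (v₀ ++ x0pow J)
      = if j = J then (f J) v₀ else 0 := by
    intro j hjs
    rw [← sh_wordS_right, Finsupp.sum_apply]
    have : ∀ v ∈ (f j).support, ((f j) v • shWord v (x0pow j)) (v₀ ++ x0pow J)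
        = if j = J then (if v = v₀ then (f j) v else 0) else 0 := by
      intro v hvs
      rw [Finsupp.smul_apply, eval_key hv₀ (h0 j v hvs) (hJ j hjs)]
      by_cases h1 : j = J <;> by_cases h2 : v = v₀ <;> simp [h1, h2]
    rw [Finsupp.sum, Finset.sum_congr rfl this]
    by_cases h1 : j = J
    · subst h1
      simp only [eq_self_iff_true, if_true]
      rw [Finset.sum_ite_eq' ((f j).support) v₀ (fun v => (f j) v)]
      by_cases h : v₀ ∈ (f j).support
      · simp [h]
      · simp [h, Finsupp.notMem_support_iff.1 h]
    · simp [h1]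
  rw [Finsupp.sum, Finset.sum_congr rfl hterm, Finset.sum_ite_eq' f.support J (fun _ => (f J) v₀)]
  by_cases h : J ∈ f.support
  · simp [h]
  · simp [h, Finsupp.notMem_support_iff.1 h]

lemma decomp_unique_zero {f : ℕ →₀ S} (h0 : ∀ j, InS0 (f j)) (h : decomp0Sum f = 0) :
    f = 0 := by
  by_contra hf
  have hs : f.support.Nonempty := Finsupp.support_nonempty_iff.2 hf
  set J := f.support.max' hs with hJdef
  have hJmem : J ∈ f.support := f.support.max'_mem hs
  have hle : ∀ j ∈ f.support, j ≤ J := fun j hj => Finset.le_max' _ _ hj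
  have hfJ : f J = 0 := by
    ext v₀
    by_cases hv₀ : EndsInX1 v₀
    · have := decomp0Sum_apply_top h0 hle hv₀
      rw [h] at this
      simpa using this.symm
    · by_contra hne
      exact hv₀ (h0 J v₀ (Finsupp.mem_support_iff.2 hne))
  exact (Finsupp.mem_support_iff.1 hJmem) hfJ

-- ===== existence =====
lemma exists_decomp_aux : ∀ n : ℕ, ∀ u : S, (∀ t ∈ u.support, tr t < n) →
    ∃ f : ℕ →₀ S, (∀ j, InS0 (f j)) ∧ u = decomp0Sum f := by
  intro n
  induction n with
  | zero =>
    intro u hu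
    have : u = 0 := by
      ext t
      by_contra h
      exact absurd (hu t (Finsupp.mem_support_iff.2 (by simpa using h))) (by omega)
    exact ⟨0, fun j => by simpa using inS0_zero, by rw [this, decomp0Sum_zero]⟩
  | succ n ih =>
    intro u hu
    -- choose remainders
    have hch : ∀ t : Word, ∃ r : S,
        shWord (core t) (x0pow (tr t)) = wordS (core t ++ x0pow (tr t)) + r ∧
        ∀ s ∈ r.support, tr s < tr t ∧ true ∈ s :=
      fun t => shWord_structure ((core t).length + tr t) (core t) (endsInX1_core t) (tr t) le_rfl
    choose r hre hrs using hch
    set f₀ : ℕ →₀ S := u.sum fun t c => Finsupp.single (tr t) (Finsupp.single (core t) c)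
      with hf₀
    set e : S := u.sum fun t c => c • r t with he
    have hA : decomp0Sum f₀ = u + e := by
      have hmap := map_finsuppSum D0hom u (fun t c => Finsupp.single (tr t) (Finsupp.single (core t) c))
      have hstep : ∀ t ∈ u.support,
          decomp0Sum (Finsupp.single (tr t) (Finsupp.single (core t) (u t)))
            = Finsupp.single t (u t) + (u t) • r t := by
        intro t _
        rw [decomp0Sum_single, sh_single_left_smul]
        rw [show wordS (x0pow (tr t)) = Finsupp.single (x0pow (tr t)) 1 from rfl]
        rw [show wordS (core t) = Finsupp.single (core t) 1 from rfl]
        rw [sh_single_left, Finsupp.sum_single_index (by simp), hre t,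
          show core t ++ x0pow (tr t) = t from (core_spec t).symm]
        simp [wordS, smul_add, Finsupp.smul_single]
      calc decomp0Sum f₀
          = Finsupp.sum u (fun t c =>
              decomp0Sum (Finsupp.single (tr t) (Finsupp.single (core t) c))) := by
            rw [hf₀]; exact hmap
        _ = Finsupp.sum u (fun t c => Finsupp.single t c + c • r t) := Finsupp.sum_congr hstep
        _ = u + e := by rw [Finsupp.sum_add, Finsupp.sum_single, he]
    have hB : ∀ s ∈ e.support, tr s < n := by
      intro s hse
      rw [he] at hse
      obtain ⟨t, htu, hts⟩ := Finset.mem_biUnion.1 (Finsupp.support_sum hse)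
      have hts' : s ∈ (r t).support := Finsupp.support_smul hts
      have h1 := (hrs t s hts').1
      have h2 := hu t htu
      omega
    obtain ⟨fe, hfe0, hfee⟩ := ih e hB
    refine ⟨f₀ - fe, fun j => inS0_sub ?_ (hfe0 j), ?_⟩
    · -- InS0 (f₀ j)
      intro w hw
      rw [hf₀, Finsupp.sum_apply, Finsupp.sum] at hw
      obtain ⟨t, htu, htw⟩ := Finsupp.mem_support_finset_sum w hw
      rw [Finsupp.single_apply] at htw
      by_cases hj : tr t = j
      · rw [if_pos hj] at htw
        have hsub := Finsupp.support_single_subset htw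
        have : w = core t := by simpa using hsub
        rw [this]
        exact endsInX1_core t
      · rw [if_neg hj] at htw; simp at htw
    · rw [decomp0Sum_sub, hA, ← hfee]; abel

/-- Every element `u` of the shuffle algebra `S` admits a unique
decomposition `u = Σ_j w_j ⧢ x0^j` with all `w_j ∈ S^0`; i.e. `S = S^0[x0]`. -/
theorem shuffle_poly_x0 (u : S) :
    ∃! f : ℕ →₀ S, (∀ j, InS0 (f j)) ∧ u = decomp0Sum f := by
  obtain ⟨f, hf0, hfe⟩ := exists_decomp_aux (u.support.sup tr + 1) u
    (fun t ht => Nat.lt_succ_of_le (Finset.le_sup ht))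
  refine ⟨f, ⟨hf0, hfe⟩, ?_⟩
  rintro g ⟨hg0, hge⟩
  have hz : decomp0Sum (g - f) = 0 := by rw [decomp0Sum_sub, ← hfe, ← hge, sub_self]
  have hgf : g - f = 0 := decomp_unique_zero
    (fun j => by rw [Finsupp.sub_apply]; exact inS0_sub (hg0 j) (hf0 j)) hz
  exact sub_eq_zero.1 hgf

end

end MZVRH
end

section
/- For every nonempty word w ∈ S^{10} (equivalently, w = x0^{k1−1} x1 ⋯ x0^{kr−1} x1 with k1 ≥ 2), the multiple polylogarithm Li(w; z) tends to the multiple zeta value ζ(w) as z tends to 1 from the left within (0,1); in particular the series defining ζ(w) converges. -/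
open scoped BigOperators

namespace MZVRH

noncomputable section

lemma summable_pi_prod (r : ℕ) (h : ℕ → ℝ) (h0 : ∀ n, 0 ≤ h n) (hs : Summable h) :
    Summable (fun m : Fin r → ℕ => ∏ i, h (m i)) := by
  induction r with
  | zero => exact .of_finite
  | succ r ih =>
    have hF : Summable (fun p : ℕ × (Fin r → ℕ) => h p.1 * ∏ i, h (p.2 i)) := by
      apply Summable.mul_of_nonneg hs ih h0
        (fun m => Finset.prod_nonneg fun i _ => h0 _)
    have h2 := hF.comp_injective (Fin.consEquiv (fun _ : Fin (r + 1) => ℕ)).symm.injective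
    convert h2 using 1
    · rfl
    funext m
    simp [Fin.consEquiv, Fin.prod_univ_succ, Function.comp, Fin.tail]

def gapMap {r : ℕ} (n : Tuples r) (i : Fin r) : ℕ :=
  if h : (i : ℕ) + 1 < r then n.1 i - n.1 ⟨i + 1, h⟩ else n.1 i

lemma gapMap_pos {r : ℕ} (n : Tuples r) (i : Fin r) : 1 ≤ gapMap n i := by
  unfold gapMap
  split
  · next h =>
    have := n.2.1 (show i < ⟨(i : ℕ) + 1, h⟩ from by simp [Fin.lt_def])
    omega
  · exact n.2.2 i

lemma gapMap_le {r : ℕ} (n : Tuples r) (i : Fin r) : gapMap n i ≤ n.1 i := by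
  unfold gapMap; split
  · omega
  · exact le_refl _

lemma gapMap_injective {r : ℕ} : Function.Injective (fun n : Tuples r => gapMap n) := by
  intro n n' hEq
  have key : ∀ k : ℕ, ∀ i : Fin r, r - (i : ℕ) = k + 1 → n.1 i = n'.1 i := by
    intro k
    induction k with
    | zero =>
      intro i hi
      have h1 : ¬ ((i : ℕ) + 1 < r) := by omega
      have h2 := congrFun hEq i
      simpa [gapMap, dif_neg h1] using h2
    | succ k ih =>
      intro i hi
      have h1 : (i : ℕ) + 1 < r := by omega
      set i' : Fin r := ⟨(i : ℕ) + 1, h1⟩ with hi'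
      have hih : n.1 i' = n'.1 i' := ih i' (by simp [hi']; omega)
      have hlt : n.1 i' < n.1 i := n.2.1 (by simp [Fin.lt_def, hi'])
      have hlt' : n'.1 i' < n'.1 i := n'.2.1 (by simp [Fin.lt_def, hi'])
      have h2 := congrFun hEq i
      simp only [gapMap, dif_pos h1] at h2
      rw [← hi'] at h2
      omega
  apply Subtype.ext; funext i
  exact key (r - (i : ℕ) - 1) i (by have := i.2; omega)

lemma summable_inv_prod (ks : List ℕ) (hr : 0 < ks.length)
    (hk2 : 2 ≤ ks.get ⟨0, hr⟩) (hk1 : ∀ i, 1 ≤ ks.get i) :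
    Summable (fun n : Tuples ks.length => (∏ i, (n.1 i : ℝ) ^ ks.get i)⁻¹) := by
  set r := ks.length with hrdef
  set a : ℝ := 1 + (r : ℝ)⁻¹ with hadef
  have hrR : (0 : ℝ) < (r : ℝ) := by exact_mod_cast hr
  have ha1 : 1 < a := by
    rw [hadef]
    exact lt_add_of_pos_right 1 (inv_pos.2 hrR)
  have hsum_h : Summable (fun t : ℕ => (t : ℝ) ^ (-a)) :=
    Real.summable_nat_rpow.2 (by linarith)
  have hg : Summable (fun m : Fin r → ℕ => ∏ i, ((m i : ℝ)) ^ (-a)) := by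
    apply summable_pi_prod r _ (fun t => Real.rpow_nonneg (Nat.cast_nonneg t) _) hsum_h
  have hcomp : Summable
      ((fun m : Fin r → ℕ => ∏ i, ((m i : ℝ)) ^ (-a)) ∘ fun n : Tuples r => gapMap n) :=
    hg.comp_injective gapMap_injective
  apply Summable.of_nonneg_of_le (f := _) _ _ hcomp
  · intro n
    have : (0:ℝ) < ∏ i, (n.1 i : ℝ) ^ ks.get i := by
      apply Finset.prod_pos
      intro i _
      have := n.2.2 i
      positivity
    positivity
  · intro n
    set n0 := n.1 ⟨0, hr⟩ with hn0
    have hn0pos : 0 < n0 := n.2.2 _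
    set M : ℕ := ∏ i, gapMap n i with hM
    have hMpos : 0 < M := Finset.prod_pos fun i _ => gapMap_pos n i
    have hM1 : M ≤ ∏ i, n.1 i := Finset.prod_le_prod' fun i _ => gapMap_le n i
    have hM2 : M ≤ n0 ^ r := by
      calc M ≤ ∏ _i : Fin r, n0 := by
              apply Finset.prod_le_prod'
              intro i _
              exact le_trans (gapMap_le n i) (n.2.1.antitone (by simp [Fin.le_def]))
        _ = n0 ^ r := by rw [Finset.prod_const, Finset.card_univ, Fintype.card_fin]
    have hP : n0 * ∏ i, n.1 i ≤ ∏ i, n.1 i ^ ks.get i := by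
      rw [← Finset.mul_prod_erase Finset.univ n.1 (Finset.mem_univ ⟨0, hr⟩),
        ← Finset.mul_prod_erase Finset.univ (fun i => n.1 i ^ ks.get i) (Finset.mem_univ ⟨0, hr⟩),
        ← mul_assoc]
      apply Nat.mul_le_mul
      · calc n0 * n0 = n0 ^ 2 := (sq n0).symm
          _ ≤ n0 ^ ks.get ⟨0, hr⟩ := Nat.pow_le_pow_right hn0pos hk2
      · apply Finset.prod_le_prod'
        intro i _
        calc n.1 i = n.1 i ^ 1 := (pow_one _).symm
          _ ≤ n.1 i ^ ks.get i := Nat.pow_le_pow_right (n.2.2 i) (hk1 i)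
    -- real computation
    have hMR : (0:ℝ) < (M : ℝ) := by exact_mod_cast hMpos
    have key : ((M : ℝ)) ^ a ≤ ∏ i, (n.1 i : ℝ) ^ ks.get i := by
      have h2 : ((M : ℝ)) ^ ((r : ℝ)⁻¹) ≤ (n0 : ℝ) := by
        have hle : (M : ℝ) ≤ ((n0 : ℝ)) ^ (r : ℕ) := by exact_mod_cast hM2
        calc ((M : ℝ)) ^ ((r : ℝ)⁻¹) ≤ (((n0 : ℝ)) ^ (r : ℕ)) ^ ((r : ℝ)⁻¹) :=
              Real.rpow_le_rpow (Nat.cast_nonneg _) hle (by positivity)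
          _ = ((n0 : ℝ)) ^ ((r : ℝ) * (r : ℝ)⁻¹) := by
              rw [← Real.rpow_natCast ((n0 : ℝ)) r, ← Real.rpow_mul (Nat.cast_nonneg _)]
          _ = (n0 : ℝ) := by rw [mul_inv_cancel₀ (ne_of_gt hrR), Real.rpow_one]
      calc ((M : ℝ)) ^ a = (M : ℝ) * ((M : ℝ)) ^ ((r : ℝ)⁻¹) := by
            rw [hadef, Real.rpow_add hMR, Real.rpow_one]
        _ ≤ (∏ i, (n.1 i : ℝ)) * (n0 : ℝ) := by
            apply mul_le_mul _ h2 (by positivity) (by positivity)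
            exact_mod_cast hM1
        _ = ((n0 * ∏ i, n.1 i : ℕ) : ℝ) := by push_cast; ring
        _ ≤ ((∏ i, n.1 i ^ ks.get i : ℕ) : ℝ) := by exact_mod_cast hP
        _ = ∏ i, (n.1 i : ℝ) ^ ks.get i := by push_cast; rfl
    have hgap : ∏ i, ((gapMap n i : ℝ)) ^ (-a) = (((M : ℝ)) ^ a)⁻¹ := by
      calc ∏ i, ((gapMap n i : ℝ)) ^ (-a)
          = ∏ i, (((gapMap n i : ℝ)) ^ a)⁻¹ :=
            Finset.prod_congr rfl fun i _ => Real.rpow_neg (Nat.cast_nonneg _) a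
        _ = (∏ i, ((gapMap n i : ℝ)) ^ a)⁻¹ := by rw [Finset.prod_inv_distrib]
        _ = ((∏ i, ((gapMap n i : ℝ))) ^ a)⁻¹ := by
            rw [Real.finset_prod_rpow _ _ (fun i _ => Nat.cast_nonneg _) a]
        _ = (((M : ℝ)) ^ a)⁻¹ := by rw [hM]; push_cast; rfl
    show (∏ i, (n.1 i : ℝ) ^ ks.get i)⁻¹ ≤ ∏ i, ((gapMap n i : ℝ)) ^ (-a)
    rw [hgap]
    have hPpos : (0:ℝ) < ∏ i, (n.1 i : ℝ) ^ ks.get i := lt_of_lt_of_le (by positivity) key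
    exact (inv_le_inv₀ hPpos (by positivity)).2 key


lemma toComp_pos : ∀ (w : Word), ∀ k ∈ toComp w, 1 ≤ k
  | [] => by simp [toComp]
  | true :: w => by
      simp only [toComp, List.mem_cons]
      rintro k (rfl | hk)
      · omega
      · exact toComp_pos w k hk
  | false :: w => by
      intro k hk
      simp only [toComp] at hk
      rcases h : toComp w with _ | ⟨k', ks⟩ <;> rw [h] at hk
      · simp at hk
      · rcases List.mem_cons.1 hk with rfl | hk'
        · have := toComp_pos w k' (h ▸ List.mem_cons_self); omega
        · exact toComp_pos w k (h ▸ List.mem_cons_of_mem _ hk')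

lemma toComp_ne_nil : ∀ (w : Word), w.getLast? = some true → toComp w ≠ []
  | [], h => by simp at h
  | [b], h => by
      simp at h; subst h; simp [toComp]
  | b :: c :: t, h => by
      rw [List.getLast?_cons_cons] at h
      have ih := toComp_ne_nil (c :: t) h
      cases b
      · simp only [toComp]
        rcases hc : toComp (c :: t) with _ | ⟨k, ks⟩
        · exact absurd hc ih
        · simp
      · simp [toComp]

lemma toComp_head (w : Word) (hne : w ≠ []) (hw : BeginsEndsX0X1 w) :
    ∃ k ks, toComp w = k :: ks ∧ 2 ≤ k := by
  rcases hw with rfl | ⟨h1, h2⟩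
  · exact absurd rfl hne
  cases w with
  | nil => exact absurd rfl hne
  | cons b t =>
    simp only [List.head?_cons, Option.some_inj] at h1
    subst h1
    cases t with
    | nil => simp at h2
    | cons c t' =>
      rw [List.getLast?_cons_cons] at h2
      obtain ⟨k, ks, hks⟩ : ∃ k ks, toComp (c :: t') = k :: ks := by
        rcases h : toComp (c :: t') with _ | ⟨k, ks⟩
        · exact absurd h (toComp_ne_nil _ h2)
        · exact ⟨k, ks, rfl⟩
      have hk1 : 1 ≤ k := toComp_pos _ k (hks ▸ List.mem_cons_self)
      refine ⟨k + 1, ks, ?_, by omega⟩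
      simp only [toComp, hks]

lemma get_zero_eq_headI (l : List ℕ) (h : 0 < l.length) : l.get ⟨0, h⟩ = l.headI := by
  cases l
  · simp at h
  · rfl

lemma norm_term (ks : List ℕ) (n : Tuples ks.length) :
    ‖(1 : ℂ) / ∏ i, ((n.1 i : ℂ)) ^ ks.get i‖ = (∏ i, (n.1 i : ℝ) ^ ks.get i)⁻¹ := by
  rw [norm_div, norm_one, norm_prod, one_div]
  congr 1
  refine Finset.prod_congr rfl fun i _ => ?_
  rw [norm_pow, Complex.norm_natCast]

/-- For a nonempty word `w ∈ S^{10}`, the series defining `ζ(w)` converges and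
`Li(w; z) → ζ(w)` as `z → 1⁻` within `(0,1)`. -/
theorem Li_tendsto_zeta (w : Word) (hne : w ≠ []) (hw : BeginsEndsX0X1 w) :
    Summable (fun n : Tuples (toComp w).length =>
        1 / ∏ i : Fin (toComp w).length, (n.1 i : ℂ) ^ (toComp w).get i) ∧
    Filter.Tendsto (fun z : ℝ => LiComp (toComp w) (z : ℂ))
      (nhdsWithin 1 (Set.Ioo (0 : ℝ) 1)) (nhds (zetaComp (toComp w))) := by
  obtain ⟨k, ks', hks, hk2'⟩ := toComp_head w hne hw
  have hr : 0 < (toComp w).length := by rw [hks]; simp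
  have hk2 : 2 ≤ (toComp w).get ⟨0, hr⟩ := by
    rw [get_zero_eq_headI, hks]
    exact hk2'
  have hk1 : ∀ i, 1 ≤ (toComp w).get i :=
    fun i => toComp_pos w _ (List.get_mem _ _)
  have hsumR := summable_inv_prod (toComp w) hr hk2 hk1
  have hnorm : ∀ n : Tuples (toComp w).length,
      ‖(1 : ℂ) / ∏ i, ((n.1 i : ℂ)) ^ (toComp w).get i‖
        = (∏ i, (n.1 i : ℝ) ^ (toComp w).get i)⁻¹ := norm_term (toComp w)
  constructor
  · apply Summable.of_norm
    simp only [hnorm]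
    exact hsumR
  · simp only [LiComp, dif_pos hr]
    have key := tendsto_tsum_of_dominated_convergence
      (f := fun (z : ℝ) (n : Tuples (toComp w).length) =>
        ((z : ℂ)) ^ n.1 ⟨0, hr⟩ / ∏ i, ((n.1 i : ℂ)) ^ (toComp w).get i)
      (g := fun n : Tuples (toComp w).length =>
        1 / ∏ i, ((n.1 i : ℂ)) ^ (toComp w).get i)
      (bound := fun n : Tuples (toComp w).length =>
        (∏ i, (n.1 i : ℝ) ^ (toComp w).get i)⁻¹)
      (𝓕 := nhdsWithin 1 (Set.Ioo (0 : ℝ) 1))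
      hsumR ?_ ?_
    · exact key
    · intro n
      have hc : Continuous fun z : ℝ => ((z : ℂ)) ^ n.1 ⟨0, hr⟩ :=
        Complex.continuous_ofReal.pow _
      have h1 : Filter.Tendsto (fun z : ℝ => ((z : ℂ)) ^ n.1 ⟨0, hr⟩)
          (nhdsWithin 1 (Set.Ioo (0 : ℝ) 1)) (nhds 1) := by
        have := hc.tendsto 1
        simp only [Complex.ofReal_one, one_pow] at this
        exact this.mono_left nhdsWithin_le_nhds
      exact h1.div_const _
    · filter_upwards [self_mem_nhdsWithin] with z hz
      intro n
      have hQ : (0 : ℝ) < ∏ i, (n.1 i : ℝ) ^ (toComp w).get i :=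
        Finset.prod_pos fun i _ => pow_pos (by exact_mod_cast n.2.2 i) _
      have hzn : ‖((z : ℂ)) ^ n.1 ⟨0, hr⟩‖ ≤ 1 := by
        rw [norm_pow, Complex.norm_real, Real.norm_eq_abs,
          abs_of_pos hz.1]
        exact pow_le_one₀ hz.1.le hz.2.le
      have hPn : ‖∏ i, ((n.1 i : ℂ)) ^ (toComp w).get i‖
          = ∏ i, (n.1 i : ℝ) ^ (toComp w).get i := by
        rw [norm_prod]
        refine Finset.prod_congr rfl fun i _ => ?_
        rw [norm_pow, Complex.norm_natCast]
      rw [norm_div, hPn, ← one_div]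
      exact (div_le_div_iff_of_pos_right hQ).2 hzn

end

end MZVRH
end
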